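/- Let p be prime and let (A,B,C) be a triple of nonempty subsets of Z/pZ with 0 ∉ A+B+C and |A|+|B|+|C| > p. Then either min{|A|,|B|,|C|} = 1, or A, B, and C are all arithmetic progressions with a common difference. -/

import Mathlib

open Pointwise

/-- `S` is an arithmetic progression with difference `d`. -/
def IsAP {G : Type*} [AddCommGroup G] (S : Set G) (d : G) : Prop :=
  ∃ (x : G) (k : ℕ), S = (fun i : ℕ => x + i • d) '' {i | i ≤ k}

section VosperTrio

open Finset

variable {p : ℕ} [NeZero p]

/-- Finset version of arithmetic progression with difference d. -/
def FinAP (S : Finset (ZMod p)) (d : ZMod p) : Prop :=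
  ∃ x, S = (Finset.range S.card).image (fun i : ℕ => x + i • d)

lemma closed_eq_univ (hp : p.Prime) {S : Finset (ZMod p)} {d : ZMod p}
    (hd : d ≠ 0) (hne : S.Nonempty) (hcl : ∀ x ∈ S, x + d ∈ S) : S = Finset.univ := by
  haveI := Fact.mk hp
  obtain ⟨x₀, hx₀⟩ := hne
  have key : ∀ n : ℕ, x₀ + n • d ∈ S := by
    intro n
    induction n with
    | zero => simpa using hx₀
    | succ n ih =>
        have := hcl _ ih
        rwa [succ_nsmul, ← add_assoc]
  apply Finset.eq_univ_of_forall
  intro y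
  obtain ⟨n, hn⟩ := ZMod.natCast_zmod_surjective (n := p) ((y - x₀) * d⁻¹)
  have h2 : x₀ + n • d = y := by
    rw [nsmul_eq_mul, hn]
    field_simp
    ring
  rw [← h2]; exact key n

lemma interval_lemma (hp : p.Prime) {S : Finset (ZMod p)} {d : ZMod p}
    (hd : d ≠ 0) (hne : S.Nonempty) (hSu : S ≠ Finset.univ)
    (hcard : (S ∪ S.image (· + d)).card ≤ S.card + 1) :
    ∃ x, S = (Finset.range S.card).image (fun i : ℕ => x + i • d) := by
  classical
  set S' := S.image (· + d) with hS'
  have hinj : Function.Injective (· + d) := add_left_injective d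
  have hS'card : S'.card = S.card := Finset.card_image_of_injective _ hinj
  have hmem' : ∀ v : ZMod p, v ∈ S' ↔ v - d ∈ S := by
    intro v
    simp only [hS', Finset.mem_image]
    constructor
    · rintro ⟨a, ha, rfl⟩; simpa using ha
    · intro h; exact ⟨v - d, h, by ring⟩
  -- S \ S' is nonempty (else S closed under +d)
  have hclosed : ¬ (∀ x ∈ S, x + d ∈ S) := fun h => hSu (closed_eq_univ hp hd hne h)
  have hSS' : (S \ S').Nonempty := by
    rw [Finset.sdiff_nonempty]
    intro hsub
    apply hclosed
    intro x hx
    have hxd : x + d ∈ S' := by rw [hmem']; simpa using hx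
    have heq : S = S' := Finset.eq_of_subset_of_card_le hsub (le_of_eq hS'card)
    rwa [← heq] at hxd
  have hcard1 : (S \ S').card ≤ 1 := by
    have h1 : (S ∪ S').card + (S ∩ S').card = S.card + S'.card :=
      Finset.card_union_add_card_inter S S'
    have h2 : (S \ S').card + (S ∩ S').card = S.card := by
      rw [Finset.card_sdiff_add_card_inter]
    omega
  obtain ⟨w, hw⟩ : ∃ w, S \ S' = {w} := Finset.card_eq_one.1 (le_antisymm hcard1 hSS'.card_pos)
  have hwS : w ∈ S := by
    have : w ∈ S \ S' := hw ▸ Finset.mem_singleton_self w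
    exact (Finset.mem_sdiff.1 this).1
  have huniq : ∀ v ∈ S, v - d ∉ S → v = w := by
    intro v hv hvd
    have : v ∈ S \ S' := Finset.mem_sdiff.2 ⟨hv, fun h => hvd ((hmem' v).1 h)⟩
    rw [hw] at this; exact Finset.mem_singleton.1 this
  -- the forward walk from w must exit S
  have hexit : ∃ j : ℕ, w + (j + 1) • d ∉ S := by
    by_contra h
    push_neg at h
    apply hclosed
    intro x hx
    obtain ⟨n, hn⟩ := ZMod.natCast_zmod_surjective (n := p) ((x - w) * d⁻¹)
    haveI := Fact.mk hp
    have hx' : x = w + n • d := by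
      rw [nsmul_eq_mul, hn]; field_simp; ring
    have : x + d = w + (n + 1) • d := by rw [hx', succ_nsmul, ← add_assoc]
    rw [this]; exact h n
  set j₀ := Nat.find hexit with hj₀def
  have hj₀ : w + (j₀ + 1) • d ∉ S := Nat.find_spec hexit
  have hstay : ∀ j ≤ j₀, w + j • d ∈ S := by
    intro j hj
    cases j with
    | zero => simpa using hwS
    | succ k =>
        have : ¬ (w + (k + 1) • d ∉ S) := Nat.find_min hexit (by omega)
        simpa using this
  -- j₀ < p
  have hj₀lt : j₀ < p := by
    by_contra h
    push_neg at h
    apply hSu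
    apply Finset.eq_univ_of_forall
    intro y
    obtain ⟨n, hn⟩ := ZMod.natCast_zmod_surjective (n := p) ((y - w) * d⁻¹)
    haveI := Fact.mk hp
    have hy : y = w + (n % p) • d := by
      rw [nsmul_eq_mul, ZMod.natCast_mod, hn]; field_simp; ring
    rw [hy]
    exact hstay _ (by have := Nat.mod_lt n (NeZero.pos p); omega)
  haveI := Fact.mk hp
  -- S is exactly the walk of length j₀
  have hsub1 : S ⊆ (Finset.range (j₀ + 1)).image (fun i : ℕ => w + i • d) := by
    intro u hu
    obtain ⟨n, hn⟩ := ZMod.natCast_zmod_surjective (n := p) ((u - w) * d⁻¹)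
    have hmp : n % p < p := Nat.mod_lt n (NeZero.pos p)
    have hu' : u = w + (n % p) • d := by
      rw [nsmul_eq_mul, ZMod.natCast_mod, hn]; field_simp; ring
    set m := n % p with hm
    rw [Finset.mem_image]
    refine ⟨m, Finset.mem_range.2 ?_, hu'.symm⟩
    by_contra hmm
    push_neg at hmm
    have hQ : ∃ j, j₀ < j ∧ w + j • d ∈ S := ⟨m, by omega, hu' ▸ hu⟩
    set m' := Nat.find hQ with hm'def
    obtain ⟨hm'1, hm'2⟩ := Nat.find_spec hQ
    rw [← hm'def] at hm'1 hm'2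
    have hm'le : m' ≤ m := Nat.find_min' hQ ⟨by omega, hu' ▸ hu⟩
    have hm'ne : m' ≠ j₀ + 1 := by
      intro h
      rw [h] at hm'2
      exact hj₀ hm'2
    have hm'2' : j₀ + 1 < m' := by omega
    have hprev : w + (m' - 1) • d ∉ S := by
      intro hIn
      have : ¬ (j₀ < m' - 1 ∧ w + (m' - 1) • d ∈ S) := Nat.find_min hQ (by omega)
      exact this ⟨by omega, hIn⟩
    have hvd : (w + m' • d) - d = w + (m' - 1) • d := by
      obtain ⟨a, ha⟩ : ∃ a, m' = a + 1 := ⟨m' - 1, by omega⟩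
      rw [ha, Nat.add_sub_cancel, succ_nsmul]
      ring
    have hvw : w + m' • d = w := huniq _ hm'2 (by rw [hvd]; exact hprev)
    have : (m' : ZMod p) * d = 0 := by
      have := hvw
      rw [nsmul_eq_mul] at this
      linear_combination this
    have hm'0 : (m' : ZMod p) = 0 := by
      rcases mul_eq_zero.1 this with h | h
      · exact h
      · exact absurd h hd
    have := (ZMod.natCast_eq_zero_iff m' p).1 hm'0
    have : p ≤ m' := Nat.le_of_dvd (by omega) this
    omega
  have hsub2 : (Finset.range (j₀ + 1)).image (fun i : ℕ => w + i • d) ⊆ S := by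
    intro u hu
    rw [Finset.mem_image] at hu
    obtain ⟨i, hi, rfl⟩ := hu
    exact hstay i (by simpa using Nat.lt_succ_iff.1 (Finset.mem_range.1 hi))
  have heq : S = (Finset.range (j₀ + 1)).image (fun i : ℕ => w + i • d) :=
    le_antisymm hsub1 hsub2
  have hinjOn : Set.InjOn (fun i : ℕ => w + i • d) (Finset.range (j₀ + 1)) := by
    intro i hi j hj hij
    simp only [Finset.coe_range, Set.mem_Iio] at hi hj
    simp only [nsmul_eq_mul, add_right_inj] at hij
    have : (i : ZMod p) = j := by
      rcases mul_eq_zero.1 (by linear_combination hij : ((i : ZMod p) - j) * d = 0) with h | h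
      · linear_combination h
      · exact absurd h hd
    have hi' : i < p := by omega
    have hj' : j < p := by omega
    calc i = (i : ZMod p).val := (ZMod.val_cast_of_lt hi').symm
    _ = (j : ZMod p).val := by rw [this]
    _ = j := ZMod.val_cast_of_lt hj'
  have hcardeq : S.card = j₀ + 1 := by
    rw [heq, Finset.card_image_of_injOn hinjOn, Finset.card_range]
  refine ⟨w, ?_⟩
  rw [hcardeq]
  exact heq

lemma trio_pair (hp : p.Prime) {A B C : Finset (ZMod p)}
    (hA : A.Nonempty) (hB : B.Nonempty) (hC : C.Nonempty)
    (h0 : (0 : ZMod p) ∉ A + B + C) (hbig : p < A.card + B.card + C.card) :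
    A.card + B.card + C.card = p + 1 ∧ (A + B).card + 1 = A.card + B.card := by
  classical
  have hsub : A + B + C ⊆ Finset.univ \ {0} := by
    intro x hx
    rw [Finset.mem_sdiff, Finset.mem_singleton]
    exact ⟨Finset.mem_univ x, fun h => h0 (h ▸ hx)⟩
  have hcup : Fintype.card (ZMod p) = p := ZMod.card p
  have h1 : (A + B + C).card ≤ p - 1 := by
    have := Finset.card_le_card hsub
    rwa [Finset.card_sdiff_of_subset (by simp), Finset.card_singleton, Finset.card_univ, hcup] at this
  have cd1 := ZMod.cauchy_davenport hp (hA.add hB) hC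
  have cd2 := ZMod.cauchy_davenport hp hA hB
  have hAB1 : (A + B).card ≤ p := le_trans (Finset.card_le_univ _) (le_of_eq hcup)
  have hA1 : 1 ≤ A.card := hA.card_pos
  have hB1 : 1 ≤ B.card := hB.card_pos
  have hC1 : 1 ≤ C.card := hC.card_pos
  have hp2 : 2 ≤ p := hp.two_le
  rcases min_cases p ((A + B).card + C.card - 1) with ⟨h, h'⟩ | ⟨h, h'⟩ <;>
    rcases min_cases p (A.card + B.card - 1) with ⟨g, g'⟩ | ⟨g, g'⟩ <;>
      rw [h] at cd1 <;> rw [g] at cd2 <;> omega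

lemma propagate (hp : p.Prime) {B C : Finset (ZMod p)} {d x : ZMod p} {k : ℕ}
    (hC : C = (Finset.range (k + 1)).image (fun i : ℕ => x + i • d))
    (hck : C.card = k + 1) (hk : 1 ≤ k) (hB : B.Nonempty)
    (hBC : (B + C).card = B.card + k) (hlt : B.card + k < p) :
    ∃ y, B = (Finset.range B.card).image (fun i : ℕ => y + i • d) := by
  classical
  have hd : d ≠ 0 := by
    rintro rfl
    have : C ⊆ {x} := by
      rw [hC]; intro c hc
      simp only [Finset.mem_image, smul_zero, add_zero] at hc
      obtain ⟨i, _, rfl⟩ := hc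
      simp
    have := Finset.card_le_card this
    simp [hck] at this
    omega
  set U : ℕ → Finset (ZMod p) := fun j => (Finset.range (j + 1)).biUnion (fun i => B.image (· + i • d)) with hU
  have hU0 : U 0 = B := by
    simp only [hU, Finset.range_one, Finset.biUnion_singleton, zero_nsmul, add_zero]
    ext z
    simp
  have hUmono : ∀ j j', j ≤ j' → U j ⊆ U j' := by
    intro j j' hj
    exact Finset.biUnion_subset_biUnion_of_subset_left _ (by
      intro i hi; rw [Finset.mem_range] at *; omega)
  have hUk : (U k).image (· + x) = B + C := by
    ext z
    simp only [Finset.mem_image, hU, Finset.mem_biUnion, Finset.mem_range, Finset.mem_add, hC]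
    constructor
    · rintro ⟨u, ⟨i, hi, ⟨b, hb, rfl⟩⟩, rfl⟩
      exact ⟨b, hb, x + i • d, ⟨i, hi, rfl⟩, by ring⟩
    · rintro ⟨b, hb, c, ⟨i, hi, rfl⟩, rfl⟩
      exact ⟨b + i • d, ⟨i, hi, b, hb, rfl⟩, by ring⟩
  have hUkcard : (U k).card = B.card + k := by
    rw [← hBC, ← hUk, Finset.card_image_of_injective _ (add_left_injective x)]
  have hBsubU : ∀ j, B ⊆ U j := fun j => hU0 ▸ hUmono 0 j (by omega)
  have hstep : ∀ j, j < k → (U j).card < (U (j + 1)).card := by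
    intro j hj
    have hsub : U j ⊆ U (j + 1) := hUmono j (j + 1) (by omega)
    rcases lt_or_ge (U j).card (U (j + 1)).card with h | h
    · exact h
    · exfalso
      have heq : U j = U (j + 1) := Finset.eq_of_subset_of_card_le hsub h
      have hclosed : ∀ u ∈ U j, u + d ∈ U j := by
        intro u hu
        simp only [hU, Finset.mem_biUnion, Finset.mem_range, Finset.mem_image] at hu
        obtain ⟨i, hi, b, hb, rfl⟩ := hu
        have : b + i • d + d = b + (i + 1) • d := by rw [succ_nsmul]; ring
        rw [heq, this]
        simp only [hU, Finset.mem_biUnion, Finset.mem_range, Finset.mem_image]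
        exact ⟨i + 1, by omega, b, hb, rfl⟩
      have huniv := closed_eq_univ hp hd (hB.mono (hBsubU j)) hclosed
      have : (U j).card ≤ (U k).card := Finset.card_le_card (hUmono j k (by omega))
      rw [huniv, Finset.card_univ, ZMod.card] at this
      omega
  have hgrow : ∀ j, j ≤ k → 1 ≤ j → (U 1).card + (j - 1) ≤ (U j).card := by
    intro j
    induction j with
    | zero => omega
    | succ i ih =>
        intro hik _
        rcases Nat.eq_or_lt_of_le (show 1 ≤ i + 1 from by omega) with h | h
        · simp [← h]
        · have h1 : 1 ≤ i := by omega
          have := ih (by omega) h1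
          have := hstep i (by omega)
          omega
  have hU1le : (U 1).card ≤ B.card + 1 := by
    have := hgrow k (le_refl k) hk
    omega
  have hU1 : U 1 = B ∪ B.image (· + d) := by
    ext z
    simp only [hU, Finset.mem_biUnion, Finset.mem_range, Finset.mem_union, Finset.mem_image]
    constructor
    · rintro ⟨i, hi, b, hb, rfl⟩
      interval_cases i
      · left; simpa using hb
      · right; exact ⟨b, hb, by simp⟩
    · rintro (hz | ⟨b, hb, rfl⟩)
      · exact ⟨0, by omega, z, hz, by simp⟩
      · exact ⟨1, by omega, b, hb, by simp⟩
  have hBuniv : B ≠ Finset.univ := by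
    intro h
    have : p ≤ B.card := by rw [h, Finset.card_univ, ZMod.card]
    omega
  exact interval_lemma hp hd hB hBuniv (by rw [← hU1]; exact hU1le)

lemma stuck_contradiction (hp : p.Prime) {X Y Z : Finset (ZMod p)}
    (hX3 : 3 ≤ X.card) (hY3 : 3 ≤ Y.card) (hxy : X.card ≤ Y.card) (hyz : Y.card ≤ Z.card)
    (hxz : X.card ≤ Z.card)
    (hsum : X.card + Y.card + Z.card = p + 1)
    (hXY : (X + Y).card + 1 = X.card + Y.card)
    (hstuck : ∀ e : ZMod p,
      (Y.filter fun b => b + e ∈ Z).card ≤ 1 ∨ (Y.filter fun b => b + e ∈ Z).card = Y.card) :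
    False := by
  classical
  set r : ZMod p → ℕ := fun e => (Y.filter fun b => b + e ∈ Z).card with hr
  have hY : Y.Nonempty := Finset.card_pos.1 (by omega)
  -- total count
  have hsumr : ∑ e : ZMod p, r e = Z.card * Y.card := by
    have h1 : (Z ×ˢ Y).card = ∑ e : ZMod p, ((Z ×ˢ Y).filter fun q => q.1 - q.2 = e).card :=
      Finset.card_eq_sum_card_fiberwise (fun q _ => Finset.mem_univ _)
    have h2 : ∀ e : ZMod p, ((Z ×ˢ Y).filter fun q => q.1 - q.2 = e).card = r e := by
      intro e
      apply Finset.card_bij (fun q _ => q.2)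
      · rintro ⟨z, y⟩ hq
        simp only [Finset.mem_filter, Finset.mem_product] at hq
        obtain ⟨⟨hz, hy⟩, he⟩ := hq
        simp only [hr, Finset.mem_filter]
        refine ⟨hy, ?_⟩
        have : y + e = z := by rw [← he]; ring
        rwa [this]
      · rintro ⟨z, y⟩ hq ⟨z', y'⟩ hq' h
        simp only at h
        simp only [Finset.mem_filter, Finset.mem_product] at hq hq'
        have : z = z' := by
          have h1 := hq.2
          have h2 := hq'.2
          subst h
          linear_combination h1 - h2
        simp [h, this]
      · intro b hb
        simp only [hr, Finset.mem_filter] at hb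
        exact ⟨(b + e, b), by simp [Finset.mem_filter, Finset.mem_product, hb.1, hb.2], rfl⟩
    rw [Finset.card_product] at h1
    rw [h1]
    exact Finset.sum_congr rfl (fun e _ => (h2 e).symm)
  have hfull : ∀ e : ZMod p, (Y.filter fun b => b + e ∈ Z).card = Y.card → ∀ b ∈ Y, b + e ∈ Z := by
    intro e he b hb
    have h1 : Y.filter (fun b => b + e ∈ Z) = Y :=
      Finset.eq_of_subset_of_card_le (Finset.filter_subset _ _) (by omega)
    have h2 : b ∈ Y.filter (fun b => b + e ∈ Z) := by rw [h1]; exact hb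
    exact (Finset.mem_filter.1 h2).2
  set D : Finset (ZMod p) := Finset.univ.filter (fun e => ∀ b ∈ Y, b + e ∈ Z) with hD
  -- D is nonempty
  have hDne : D.Nonempty := by
    by_contra hDe
    rw [Finset.not_nonempty_iff_eq_empty] at hDe
    have hre : ∀ e : ZMod p, r e ≤ 1 := by
      intro e
      rcases hstuck e with h | h
      · exact h
      · exfalso
        have : e ∈ D := by
          rw [hD, Finset.mem_filter]
          exact ⟨Finset.mem_univ _, hfull e h⟩
        rw [hDe] at this
        simp at this
    have hle : ∑ e : ZMod p, r e ≤ p := by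
      calc ∑ e : ZMod p, r e ≤ ∑ _e : ZMod p, 1 := Finset.sum_le_sum (fun e _ => hre e)
      _ = p := by simp [ZMod.card]
    rw [hsumr] at hle
    nlinarith [hyz, hY3, hsum]
  -- Y is a Sidon set
  have hSidon : ∀ t : ZMod p, t ≠ 0 → (Y.filter fun b => b + t ∈ Y).card ≤ 1 := by
    intro t ht
    by_contra hs
    push_neg at hs
    have hDcl : ∀ e ∈ D, e + t ∈ D := by
      intro e he
      rw [hD, Finset.mem_filter] at he
      have hsub : (Y.filter fun b => b + t ∈ Y) ⊆ (Y.filter fun b => b + (e + t) ∈ Z) := by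
        intro b hb
        rw [Finset.mem_filter] at hb ⊢
        refine ⟨hb.1, ?_⟩
        have := he.2 (b + t) hb.2
        rwa [show b + t + e = b + (e + t) by ring] at this
      have hge : 2 ≤ (Y.filter fun b => b + (e + t) ∈ Z).card :=
        le_trans hs (Finset.card_le_card hsub)
      rcases hstuck (e + t) with h | h
      · omega
      · rw [hD, Finset.mem_filter]
        exact ⟨Finset.mem_univ _, hfull _ h⟩
    have hDuniv : D = Finset.univ := closed_eq_univ hp ht hDne hDcl
    have hZuniv : Z = Finset.univ := by
      apply Finset.eq_univ_of_forall
      intro z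
      obtain ⟨b₀, hb₀⟩ := hY
      have : z - b₀ ∈ D := hDuniv ▸ Finset.mem_univ _
      rw [hD, Finset.mem_filter] at this
      have := this.2 b₀ hb₀
      rwa [show b₀ + (z - b₀) = z by ring] at this
    have : Z.card = p := by rw [hZuniv, Finset.card_univ, ZMod.card]
    omega
  -- three translates of Y inside X + Y
  obtain ⟨X', hX'sub, hX'card⟩ := Finset.exists_subset_card_eq (show 3 ≤ X.card from hX3)
  obtain ⟨a, b, c, hab, hac, hbc, hX'⟩ := Finset.card_eq_three.1 hX'card
  have haX : a ∈ X := hX'sub (by rw [hX']; simp)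
  have hbX : b ∈ X := hX'sub (by rw [hX']; simp)
  have hcX : c ∈ X := hX'sub (by rw [hX']; simp)
  set Ta := Y.image (a + ·) with hTa
  set Tb := Y.image (b + ·) with hTb
  set Tc := Y.image (c + ·) with hTc
  have htrans : ∀ u : ZMod p, u ∈ X → Y.image (u + ·) ⊆ X + Y := by
    intro u hu v hv
    rw [Finset.mem_image] at hv
    obtain ⟨y, hy, rfl⟩ := hv
    exact Finset.add_mem_add hu hy
  have hcard_tr : ∀ u : ZMod p, (Y.image (u + ·)).card = Y.card := fun u =>
    Finset.card_image_of_injective _ (add_right_injective u)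
  have hpair : ∀ u v : ZMod p, u ≠ v →
      ((Y.image (u + ·)) ∩ (Y.image (v + ·))).card ≤ 1 := by
    intro u v huv
    have hmap : ((Y.image (u + ·)) ∩ (Y.image (v + ·))).image (· - u) ⊆
        Y.filter (fun y => y + (u - v) ∈ Y) := by
      intro w hw
      rw [Finset.mem_image] at hw
      obtain ⟨s, hs, rfl⟩ := hw
      rw [Finset.mem_inter, Finset.mem_image, Finset.mem_image] at hs
      obtain ⟨⟨y₁, hy₁, hy₁'⟩, ⟨y₂, hy₂, hy₂'⟩⟩ := hs
      rw [Finset.mem_filter]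
      constructor
      · rw [← hy₁']; simpa using hy₁
      · have : s - u + (u - v) = y₂ := by linear_combination -hy₂'
        rw [this]; exact hy₂
    have hinj : (((Y.image (u + ·)) ∩ (Y.image (v + ·))).image (· - u)).card =
        ((Y.image (u + ·)) ∩ (Y.image (v + ·))).card :=
      Finset.card_image_of_injective _ sub_left_injective
    have := Finset.card_le_card hmap
    have hsid := hSidon (u - v) (sub_ne_zero_of_ne huv)
    omega
  have hUsub : (Ta ∪ Tb) ∪ Tc ⊆ X + Y := by
    apply Finset.union_subset (Finset.union_subset (htrans a haX) (htrans b hbX)) (htrans c hcX)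
  have e0 : ((Ta ∪ Tb) ∪ Tc).card ≤ (X + Y).card := Finset.card_le_card hUsub
  have e1 : (Ta ∪ Tb).card + (Ta ∩ Tb).card = Ta.card + Tb.card :=
    Finset.card_union_add_card_inter _ _
  have e2 : ((Ta ∪ Tb) ∪ Tc).card + ((Ta ∪ Tb) ∩ Tc).card = (Ta ∪ Tb).card + Tc.card :=
    Finset.card_union_add_card_inter _ _
  have e3 : (Ta ∪ Tb) ∩ Tc = (Ta ∩ Tc) ∪ (Tb ∩ Tc) := Finset.union_inter_distrib_right _ _ _
  have e4 : ((Ta ∪ Tb) ∩ Tc).card ≤ (Ta ∩ Tc).card + (Tb ∩ Tc).card := by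
    rw [e3]; exact Finset.card_union_le _ _
  have pab := hpair a b hab
  have pac := hpair a c hac
  have pbc := hpair b c hbc
  have ca' := hcard_tr a
  have cb' := hcard_tr b
  have cc' := hcard_tr c
  simp only [← hTa, ← hTb, ← hTc] at pab pac pbc ca' cb' cc'
  omega

lemma base_case (hp : p.Prime) {A B C : Finset (ZMod p)}
    (hA : A.Nonempty) (hB : B.Nonempty) (hC : C.Nonempty)
    (h0 : (0 : ZMod p) ∉ A + B + C) (hbig : p < A.card + B.card + C.card)
    (hA2 : A.card = 2) (hB2 : 2 ≤ B.card) (hC2 : 2 ≤ C.card) :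
    ∃ d : ZMod p, FinAP A d ∧ FinAP B d ∧ FinAP C d := by
  classical
  obtain ⟨u, v, huv, hA'⟩ := Finset.card_eq_two.1 hA2
  set d := v - u with hd
  have hdne : d ≠ 0 := by
    intro h
    apply huv
    have h' : v - u = 0 := by rw [← hd]; exact h
    linear_combination -h'
  have hAform : A = (Finset.range 2).image (fun i : ℕ => u + i • d) := by
    rw [hA']
    ext z
    simp only [Finset.mem_insert, Finset.mem_singleton, Finset.mem_image, Finset.mem_range]
    constructor
    · rintro (rfl | rfl)
      · exact ⟨0, by omega, by simp⟩
      · exact ⟨1, by omega, by rw [one_nsmul, hd]; ring⟩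
    · rintro ⟨i, hi, rfl⟩
      interval_cases i
      · left; simp
      · right; rw [one_nsmul, hd]; ring
  have hsum := (trio_pair hp hA hB hC h0 hbig).1
  have h0B : (0 : ZMod p) ∉ B + A + C := by rwa [add_comm B A]
  have h0C : (0 : ZMod p) ∉ C + A + B := by
    rw [add_comm C A, add_right_comm A C B]; exact h0
  have hBA := (trio_pair hp hB hA hC h0B (by omega)).2
  have hCA := (trio_pair hp hC hA hB h0C (by omega)).2
  obtain ⟨y, hy⟩ := propagate (k := 1) hp hAform (by omega) (le_refl 1) hB (by omega) (by omega)
  obtain ⟨z, hz⟩ := propagate (k := 1) hp hAform (by omega) (le_refl 1) hC (by omega) (by omega)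
  exact ⟨d, ⟨u, by rw [hA2]; exact hAform⟩, ⟨y, hy⟩, ⟨z, hz⟩⟩

lemma core (hp : p.Prime) :
    ∀ n : ℕ, ∀ A B C : Finset (ZMod p),
      (0 : ZMod p) ∉ A + B + C → p < A.card + B.card + C.card →
      2 ≤ A.card → 2 ≤ B.card → 2 ≤ C.card →
      (p ≤ A.card + n ∨ p ≤ B.card + n ∨ p ≤ C.card + n) →
      ∃ d : ZMod p, FinAP A d ∧ FinAP B d ∧ FinAP C d := by
  intro n
  induction n with
  | zero =>
      intro A B C h0 hbig hA2 hB2 hC2 hm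
      exfalso
      have hA : A.Nonempty := Finset.card_pos.1 (by omega)
      have hB : B.Nonempty := Finset.card_pos.1 (by omega)
      have hC : C.Nonempty := Finset.card_pos.1 (by omega)
      have hsum := (trio_pair hp hA hB hC h0 hbig).1
      omega
  | succ n IH =>
      intro A B C h0 hbig hA2 hB2 hC2 hm
      have hA : A.Nonempty := Finset.card_pos.1 (by omega)
      have hB : B.Nonempty := Finset.card_pos.1 (by omega)
      have hC : C.Nonempty := Finset.card_pos.1 (by omega)
      have eACB : A + C + B = A + B + C := add_right_comm A C B
      have eBAC : B + A + C = A + B + C := by rw [add_comm B A]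
      have eBCA : B + C + A = A + B + C := by rw [add_right_comm B C A, add_comm B A]
      have eCAB : C + A + B = A + B + C := by rw [add_comm C A, add_right_comm A C B]
      have eCBA : C + B + A = A + B + C := by rw [add_right_comm C B A, add_comm C A, add_right_comm A C B]
      -- base cases: one of the sets has exactly two elements
      by_cases hA2' : A.card = 2
      · exact base_case hp hA hB hC h0 hbig hA2' hB2 hC2
      by_cases hB2' : B.card = 2
      · obtain ⟨d, f1, f2, f3⟩ :=
          base_case hp hB hA hC (by rw [eBAC]; exact h0) (by omega) hB2' hA2 hC2
        exact ⟨d, f2, f1, f3⟩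
      by_cases hC2' : C.card = 2
      · obtain ⟨d, f1, f2, f3⟩ :=
          base_case hp hC hA hB (by rw [eCAB]; exact h0) (by omega) hC2' hA2 hB2
        exact ⟨d, f2, f3, f1⟩
      have hA3 : 3 ≤ A.card := by omega
      have hB3 : 3 ≤ B.card := by omega
      have hC3 : 3 ≤ C.card := by omega
      -- the key step, for sorted sets
      have key : ∀ X Y Z : Finset (ZMod p),
          (0 : ZMod p) ∉ X + Y + Z → p < X.card + Y.card + Z.card →
          3 ≤ X.card → X.card ≤ Y.card → Y.card ≤ Z.card → p ≤ Z.card + (n + 1) →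
          ∃ d : ZMod p, FinAP X d ∧ FinAP Y d ∧ FinAP Z d := by
        intro X Y Z h0' hbig' hX3 hxy hyz hmz
        have hX : X.Nonempty := Finset.card_pos.1 (by omega)
        have hY : Y.Nonempty := Finset.card_pos.1 (by omega)
        have hZ : Z.Nonempty := Finset.card_pos.1 (by omega)
        obtain ⟨hsum, hXY⟩ := trio_pair hp hX hY hZ h0' hbig'
        by_cases hgood : ∃ e : ZMod p, 2 ≤ (Y.filter fun b => b + e ∈ Z).card ∧
            (Y.filter fun b => b + e ∈ Z).card + 1 ≤ Y.card
        · obtain ⟨e, he1, he2⟩ := hgood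
          set Y' := Y.filter (fun b => b + e ∈ Z) with hY'
          set Z' := Z ∪ Y.image (· + e) with hZ'
          have himg : Y'.image (· + e) = Z ∩ Y.image (· + e) := by
            ext z
            simp only [hY', Finset.mem_image, Finset.mem_inter, Finset.mem_filter]
            constructor
            · rintro ⟨b, ⟨hb, hbe⟩, rfl⟩
              exact ⟨hbe, b, hb, rfl⟩
            · rintro ⟨hz, b, hb, rfl⟩
              exact ⟨b, ⟨hb, hz⟩, rfl⟩
          have hY'img : (Y'.image (· + e)).card = Y'.card :=
            Finset.card_image_of_injective _ (add_left_injective e)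
          have hYimg : (Y.image (· + e)).card = Y.card :=
            Finset.card_image_of_injective _ (add_left_injective e)
          have hcui := Finset.card_union_add_card_inter Z (Y.image (· + e))
          rw [← himg, hY'img, hYimg] at hcui
          have hsub : Y' + Z' ⊆ Y + Z := by
            intro w hw
            rw [Finset.mem_add] at hw
            obtain ⟨y', hy', z', hz', rfl⟩ := hw
            rw [hZ', Finset.mem_union] at hz'
            rcases hz' with hz' | hz'
            · exact Finset.add_mem_add (Finset.filter_subset _ _ hy') hz'
            · rw [Finset.mem_image] at hz'
              obtain ⟨b, hb, rfl⟩ := hz'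
              rw [hY', Finset.mem_filter] at hy'
              rw [Finset.mem_add]
              exact ⟨b, hb, y' + e, hy'.2, by ring⟩
          have h0'' : (0 : ZMod p) ∉ X + Y' + Z' := by
            intro hmem
            apply h0'
            rw [add_assoc] at hmem ⊢
            exact Finset.add_subset_add_left hsub hmem
          have hZsubZ' : Z ⊆ Z' := Finset.subset_union_left
          have hgc1 : Z'.card = (Z ∪ Y.image (· + e)).card := by rw [hZ']
          have hgc2 : Y'.card = (Y.filter fun b => b + e ∈ Z).card := by rw [hY']
          have hZ'ge : Z.card ≤ Z'.card := Finset.card_le_card hZsubZ'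
          obtain ⟨d, fX, _, _⟩ := IH X Y' Z' h0'' (by omega) (by omega) (by omega) (by omega)
            (Or.inr (Or.inr (by omega)))
          obtain ⟨x₀, hXform⟩ := fX
          have hd : d ≠ 0 := by
            rintro rfl
            have hXsub : X ⊆ {x₀} := by
              rw [hXform]
              intro z hz
              simp only [Finset.mem_image, smul_zero, add_zero] at hz
              obtain ⟨i, _, rfl⟩ := hz
              simp
            have := Finset.card_le_card hXsub
            simp at this
            omega
          have hxc : X.card - 1 + 1 = X.card := by omega
          have hXform' : X = (Finset.range (X.card - 1 + 1)).image (fun i : ℕ => x₀ + i • d) := by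
            rw [hxc]; exact hXform
          have h0YX : (0 : ZMod p) ∉ Y + X + Z := by rw [add_comm Y X]; exact h0'
          have h0ZX : (0 : ZMod p) ∉ Z + X + Y := by
            rw [add_comm Z X, add_right_comm X Z Y]; exact h0'
          have hYX := (trio_pair hp hY hX hZ h0YX (by omega)).2
          have hZX := (trio_pair hp hZ hX hY h0ZX (by omega)).2
          obtain ⟨y₀, hYform⟩ := propagate (k := X.card - 1) hp hXform' (by omega) (by omega) hY
            (by omega) (by omega)
          obtain ⟨z₀, hZform⟩ := propagate (k := X.card - 1) hp hXform' (by omega) (by omega) hZ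
            (by omega) (by omega)
          exact ⟨d, ⟨x₀, hXform⟩, ⟨y₀, hYform⟩, ⟨z₀, hZform⟩⟩
        · push_neg at hgood
          exfalso
          apply stuck_contradiction hp hX3 (by omega) hxy hyz (by omega) hsum hXY
          intro e
          rcases le_or_gt (Y.filter fun b => b + e ∈ Z).card 1 with h | h
          · exact Or.inl h
          · right
            have h2 := hgood e (by omega)
            have h3 : (Y.filter fun b => b + e ∈ Z).card ≤ Y.card :=
              Finset.card_le_card (Finset.filter_subset _ _)
            omega
      -- dispatch on the ordering of the three sets
      rcases le_total A.card B.card with h1 | h1 <;> rcases le_total B.card C.card with h2 | h2 <;>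
        rcases le_total A.card C.card with h3 | h3
      · exact key A B C h0 hbig hA3 h1 h2 (by omega)
      · exact key A B C h0 hbig hA3 h1 h2 (by omega)
      · obtain ⟨d, f1, f2, f3⟩ := key A C B (by rw [eACB]; exact h0) (by omega) hA3 h3 h2 (by omega)
        exact ⟨d, f1, f3, f2⟩
      · obtain ⟨d, f1, f2, f3⟩ := key C A B (by rw [eCAB]; exact h0) (by omega) hC3 h3 h1 (by omega)
        exact ⟨d, f2, f3, f1⟩
      · obtain ⟨d, f1, f2, f3⟩ := key B A C (by rw [eBAC]; exact h0) (by omega) hB3 h1 h3 (by omega)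
        exact ⟨d, f2, f1, f3⟩
      · obtain ⟨d, f1, f2, f3⟩ := key B C A (by rw [eBCA]; exact h0) (by omega) hB3 h2 h3 (by omega)
        exact ⟨d, f3, f1, f2⟩
      · obtain ⟨d, f1, f2, f3⟩ := key C B A (by rw [eCBA]; exact h0) (by omega) hC3 h2 h1 (by omega)
        exact ⟨d, f3, f2, f1⟩
      · obtain ⟨d, f1, f2, f3⟩ := key C B A (by rw [eCBA]; exact h0) (by omega) hC3 h2 h1 (by omega)
        exact ⟨d, f3, f2, f1⟩

theorem stmt_16 (p : ℕ) (hp : p.Prime)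
    (A B C : Set (ZMod p)) (hA : A.Nonempty) (hB : B.Nonempty) (hC : C.Nonempty)
    (h0 : (0 : ZMod p) ∉ A + B + C)
    (hbig : A.ncard + B.ncard + C.ncard > p) :
    min (A.ncard) (min B.ncard C.ncard) = 1 ∨
      ∃ d : ZMod p, IsAP A d ∧ IsAP B d ∧ IsAP C d := by
  classical
  haveI : NeZero p := ⟨hp.ne_zero⟩
  have hApos : 0 < A.ncard := hA.ncard_pos (Set.toFinite A)
  have hBpos : 0 < B.ncard := hB.ncard_pos (Set.toFinite B)
  have hCpos : 0 < C.ncard := hC.ncard_pos (Set.toFinite C)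
  by_cases hone : A.ncard = 1 ∨ B.ncard = 1 ∨ C.ncard = 1
  · left
    rcases hone with h | h | h <;> omega
  · push_neg at hone
    obtain ⟨h1, h2, h3⟩ := hone
    right
    set A' := (Set.toFinite A).toFinset with hA'
    set B' := (Set.toFinite B).toFinset with hB'
    set C' := (Set.toFinite C).toFinset with hC'
    have hcA : ↑A' = A := Set.Finite.coe_toFinset _
    have hcB : ↑B' = B := Set.Finite.coe_toFinset _
    have hcC : ↑C' = C := Set.Finite.coe_toFinset _
    have hnA : A.ncard = A'.card := Set.ncard_eq_toFinset_card A (Set.toFinite A)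
    have hnB : B.ncard = B'.card := Set.ncard_eq_toFinset_card B (Set.toFinite B)
    have hnC : C.ncard = C'.card := Set.ncard_eq_toFinset_card C (Set.toFinite C)
    have hadd : ∀ (S T : Set (ZMod p)),
        (Set.toFinite (S + T)).toFinset = (Set.toFinite S).toFinset + (Set.toFinite T).toFinset := by
      intro S T
      ext z
      simp only [Set.Finite.mem_toFinset, Finset.mem_add, Set.mem_add]
    have h0' : (0 : ZMod p) ∉ A' + B' + C' := by
      intro hmem
      apply h0
      rw [hA', hB', hC', ← hadd, ← hadd] at hmem
      simpa using (Set.Finite.mem_toFinset _).1 hmem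
    obtain ⟨d, fA, fB, fC⟩ := core hp p A' B' C' h0' (by omega) (by omega) (by omega) (by omega)
      (Or.inl (by omega))
    have toAP : ∀ (S : Set (ZMod p)) (S'' : Finset (ZMod p)), ↑S'' = S → 2 ≤ S''.card →
        FinAP S'' d → IsAP S d := by
      intro S S'' hcoe hc2 hfin
      obtain ⟨x, hx⟩ := hfin
      refine ⟨x, S''.card - 1, ?_⟩
      have hsets : Set.Iio S''.card = {i : ℕ | i ≤ S''.card - 1} := by
        ext i
        simp only [Set.mem_Iio, Set.mem_setOf_eq]
        omega
      calc S = ↑S'' := hcoe.symm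
      _ = ↑((Finset.range S''.card).image (fun i : ℕ => x + i • d)) := by rw [← hx]
      _ = (fun i : ℕ => x + i • d) '' Set.Iio S''.card := by
            rw [Finset.coe_image, Finset.coe_range]
      _ = (fun i : ℕ => x + i • d) '' {i : ℕ | i ≤ S''.card - 1} := by rw [hsets]
    exact ⟨d, toAP A A' hcA (by omega) fA, toAP B B' hcB (by omega) fB, toAP C C' hcC (by omega) fC⟩

end VosperTrio
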